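/- Let 0 < λ̲ ≤ λ̄, T* > 0, α ∈ (0,1), and let λ', λ'' : [0,T*] → ℝ be continuous with values in [λ̲, λ̄]. Define λ : [0,T*] → ℝ by λ(t) = ( α·λ'(t)·exp(∫₀ᵗ(1−λ'(s))ds) + (1−α)·λ''(t)·exp(∫₀ᵗ(1−λ''(s))ds) ) / ( α·exp(∫₀ᵗ(1−λ'(s))ds) + (1−α)·exp(∫₀ᵗ(1−λ''(s))ds) ). Then (i) λ̲ ≤ λ(t) ≤ λ̄ for every t ∈ [0,T*], and (ii) for every t ∈ [0,T*], ∫₀ᵗ λ(s) ds = t − log( α·exp(∫₀ᵗ(1−λ'(s))ds) + (1−α)·exp(∫₀ᵗ(1−λ''(s))ds) ), equivalently exp(∫₀ᵗ(1−λ(s))ds) = α·exp(∫₀ᵗ(1−λ'(s))ds) + (1−α)·exp(∫₀ᵗ(1−λ''(s))ds). -/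

import Mathlib

open MeasureTheory intervalIntegral Real

/-- Construction underlying Lemma 1: the convex combination of two pre-default density
factors is again a pre-default density factor of an intensity in the band. -/
theorem stmt1 (lamL lamU Tstar : ℝ) (hL : 0 < lamL) (hLU : lamL ≤ lamU) (hT : 0 < Tstar)
    (α : ℝ) (hα : α ∈ Set.Ioo (0:ℝ) 1)
    (l1 l2 : ℝ → ℝ) (hc1 : ContinuousOn l1 (Set.Icc 0 Tstar))
    (hc2 : ContinuousOn l2 (Set.Icc 0 Tstar))
    (hb1 : ∀ s ∈ Set.Icc (0:ℝ) Tstar, l1 s ∈ Set.Icc lamL lamU)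
    (hb2 : ∀ s ∈ Set.Icc (0:ℝ) Tstar, l2 s ∈ Set.Icc lamL lamU)
    (lam : ℝ → ℝ)
    (hlam : ∀ t ∈ Set.Icc (0:ℝ) Tstar,
      lam t = (α * l1 t * Real.exp (∫ s in (0:ℝ)..t, (1 - l1 s)) +
               (1 - α) * l2 t * Real.exp (∫ s in (0:ℝ)..t, (1 - l2 s))) /
              (α * Real.exp (∫ s in (0:ℝ)..t, (1 - l1 s)) +
               (1 - α) * Real.exp (∫ s in (0:ℝ)..t, (1 - l2 s)))) :
    (∀ t ∈ Set.Icc (0:ℝ) Tstar, lam t ∈ Set.Icc lamL lamU) ∧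
    (∀ t ∈ Set.Icc (0:ℝ) Tstar,
      (∫ s in (0:ℝ)..t, lam s) =
        t - Real.log (α * Real.exp (∫ s in (0:ℝ)..t, (1 - l1 s)) +
          (1 - α) * Real.exp (∫ s in (0:ℝ)..t, (1 - l2 s))) ∧
      Real.exp (∫ s in (0:ℝ)..t, (1 - lam s)) =
        α * Real.exp (∫ s in (0:ℝ)..t, (1 - l1 s)) +
          (1 - α) * Real.exp (∫ s in (0:ℝ)..t, (1 - l2 s))) := by
  obtain ⟨hα0, hα1⟩ := hα
  have hα1' : 0 < 1 - α := by linarith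
  set Z1 : ℝ → ℝ := fun t => Real.exp (∫ s in (0:ℝ)..t, (1 - l1 s)) with hZ1
  set Z2 : ℝ → ℝ := fun t => Real.exp (∫ s in (0:ℝ)..t, (1 - l2 s)) with hZ2
  set F : ℝ → ℝ := fun t => α * Z1 t + (1 - α) * Z2 t with hF
  have hZ1pos : ∀ t, 0 < Z1 t := fun t => Real.exp_pos _
  have hZ2pos : ∀ t, 0 < Z2 t := fun t => Real.exp_pos _
  have hFpos : ∀ t, 0 < F t := fun t => by
    have := hZ1pos t; have := hZ2pos t; positivity
  -- Part 1 : bounds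
  have part1 : ∀ t ∈ Set.Icc (0:ℝ) Tstar, lam t ∈ Set.Icc lamL lamU := by
    intro t ht
    rw [hlam t ht]
    have h1 := hb1 t ht
    have h2 := hb2 t ht
    have hz1 := hZ1pos t
    have hz2 := hZ2pos t
    have e1 : lamL * (α * Z1 t) ≤ α * l1 t * Z1 t := by
      have := mul_le_mul_of_nonneg_left (mul_le_mul_of_nonneg_right h1.1 hz1.le) hα0.le
      nlinarith [this]
    have e2 : lamL * ((1-α) * Z2 t) ≤ (1-α) * l2 t * Z2 t := by
      have := mul_le_mul_of_nonneg_left (mul_le_mul_of_nonneg_right h2.1 hz2.le) hα1'.le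
      nlinarith [this]
    have e3 : α * l1 t * Z1 t ≤ lamU * (α * Z1 t) := by
      have := mul_le_mul_of_nonneg_left (mul_le_mul_of_nonneg_right h1.2 hz1.le) hα0.le
      nlinarith [this]
    have e4 : (1-α) * l2 t * Z2 t ≤ lamU * ((1-α) * Z2 t) := by
      have := mul_le_mul_of_nonneg_left (mul_le_mul_of_nonneg_right h2.2 hz2.le) hα1'.le
      nlinarith [this]
    constructor
    · rw [le_div_iff₀ (hFpos t)]
      simp only [hF]; nlinarith
    · rw [div_le_iff₀ (hFpos t)]
      simp only [hF]; nlinarith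
  refine ⟨part1, ?_⟩
  -- interval integrability facts
  have hii1 : ∀ t ∈ Set.Icc (0:ℝ) Tstar, IntervalIntegrable (fun s => 1 - l1 s) volume 0 t := by
    intro t ht
    apply ContinuousOn.intervalIntegrable
    apply (continuousOn_const.sub hc1).mono
    rw [Set.uIcc_of_le ht.1]
    exact Set.Icc_subset_Icc le_rfl ht.2
  have hii2 : ∀ t ∈ Set.Icc (0:ℝ) Tstar, IntervalIntegrable (fun s => 1 - l2 s) volume 0 t := by
    intro t ht
    apply ContinuousOn.intervalIntegrable
    apply (continuousOn_const.sub hc2).mono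
    rw [Set.uIcc_of_le ht.1]
    exact Set.Icc_subset_Icc le_rfl ht.2
  -- continuity of Z1, Z2, F on Icc 0 Tstar
  have hTmem : Tstar ∈ Set.Icc (0:ℝ) Tstar := ⟨le_of_lt hT, le_rfl⟩
  have hcZ1 : ContinuousOn Z1 (Set.Icc 0 Tstar) := by
    apply Real.continuous_exp.comp_continuousOn
    have := intervalIntegral.continuousOn_primitive_interval'
      (f := fun s => 1 - l1 s) (μ := volume) (b₁ := 0) (b₂ := Tstar)
      (hii1 Tstar hTmem) (by rw [Set.uIcc_of_le hT.le]; exact ⟨le_rfl, hT.le⟩)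
    rwa [Set.uIcc_of_le hT.le] at this
  have hcZ2 : ContinuousOn Z2 (Set.Icc 0 Tstar) := by
    apply Real.continuous_exp.comp_continuousOn
    have := intervalIntegral.continuousOn_primitive_interval'
      (f := fun s => 1 - l2 s) (μ := volume) (b₁ := 0) (b₂ := Tstar)
      (hii2 Tstar hTmem) (by rw [Set.uIcc_of_le hT.le]; exact ⟨le_rfl, hT.le⟩)
    rwa [Set.uIcc_of_le hT.le] at this
  have hcF : ContinuousOn F (Set.Icc 0 Tstar) :=
    (continuousOn_const.mul hcZ1).add (continuousOn_const.mul hcZ2)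
  -- continuity of lam on Icc 0 Tstar
  have hclam : ContinuousOn lam (Set.Icc 0 Tstar) := by
    have : ContinuousOn (fun t => (α * l1 t * Z1 t + (1 - α) * l2 t * Z2 t) / F t)
        (Set.Icc 0 Tstar) := by
      apply ContinuousOn.div
      · exact ((continuousOn_const.mul hc1).mul hcZ1).add
          ((continuousOn_const.mul hc2).mul hcZ2)
      · exact hcF
      · intro t _; exact (hFpos t).ne'
    exact this.congr (fun t ht => hlam t ht)
  -- derivative of F at interior points
  have hderivF : ∀ x ∈ Set.Ioo (0:ℝ) Tstar,
      HasDerivAt F (α * (1 - l1 x) * Z1 x + (1 - α) * (1 - l2 x) * Z2 x) x := by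
    intro x hx
    have hxI : x ∈ Set.Icc (0:ℝ) Tstar := ⟨hx.1.le, hx.2.le⟩
    have hopen : IsOpen (Set.Ioo (0:ℝ) Tstar) := isOpen_Ioo
    have hca1 : ContinuousAt (fun s => 1 - l1 s) x := by
      have : ContinuousOn (fun s => 1 - l1 s) (Set.Ioo 0 Tstar) :=
        (continuousOn_const.sub hc1).mono Set.Ioo_subset_Icc_self
      exact this.continuousAt (hopen.mem_nhds hx)
    have hca2 : ContinuousAt (fun s => 1 - l2 s) x := by
      have : ContinuousOn (fun s => 1 - l2 s) (Set.Ioo 0 Tstar) :=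
        (continuousOn_const.sub hc2).mono Set.Ioo_subset_Icc_self
      exact this.continuousAt (hopen.mem_nhds hx)
    have hm1 : StronglyMeasurableAtFilter (fun s => 1 - l1 s) (nhds x) volume :=
      ContinuousOn.stronglyMeasurableAtFilter hopen
        ((continuousOn_const.sub hc1).mono Set.Ioo_subset_Icc_self) x hx
    have hm2 : StronglyMeasurableAtFilter (fun s => 1 - l2 s) (nhds x) volume :=
      ContinuousOn.stronglyMeasurableAtFilter hopen
        ((continuousOn_const.sub hc2).mono Set.Ioo_subset_Icc_self) x hx
    have hG1 : HasDerivAt (fun u => ∫ s in (0:ℝ)..u, (1 - l1 s)) (1 - l1 x) x :=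
      intervalIntegral.integral_hasDerivAt_right (hii1 x hxI) hm1 hca1
    have hG2 : HasDerivAt (fun u => ∫ s in (0:ℝ)..u, (1 - l2 s)) (1 - l2 x) x :=
      intervalIntegral.integral_hasDerivAt_right (hii2 x hxI) hm2 hca2
    have hZ1d : HasDerivAt Z1 ((1 - l1 x) * Z1 x) x := by
      have := hG1.exp; simpa [hZ1, mul_comm] using this
    have hZ2d : HasDerivAt Z2 ((1 - l2 x) * Z2 x) x := by
      have := hG2.exp; simpa [hZ2, mul_comm] using this
    have : HasDerivAt F (α * ((1 - l1 x) * Z1 x) + (1 - α) * ((1 - l2 x) * Z2 x)) x :=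
      ((hZ1d.const_mul α).add (hZ2d.const_mul (1 - α)))
    convert this using 1; ring
  -- main FTC computation
  intro t ht
  have hint : (∫ s in (0:ℝ)..t, lam s) = t - Real.log (F t) := by
    have hg : ∀ x ∈ Set.Ioo (0:ℝ) t, HasDerivWithinAt (fun u => u - Real.log (F u))
        (lam x) (Set.Ioi x) x := by
      intro x hx
      have hx' : x ∈ Set.Ioo (0:ℝ) Tstar := ⟨hx.1, lt_of_lt_of_le hx.2 ht.2⟩
      have hxI : x ∈ Set.Icc (0:ℝ) Tstar := ⟨hx'.1.le, hx'.2.le⟩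
      have hFd := hderivF x hx'
      have hlogd : HasDerivAt (fun u => Real.log (F u))
          ((α * (1 - l1 x) * Z1 x + (1 - α) * (1 - l2 x) * Z2 x) / F x) x :=
        hFd.log (hFpos x).ne'
      have hgd : HasDerivAt (fun u => u - Real.log (F u))
          (1 - (α * (1 - l1 x) * Z1 x + (1 - α) * (1 - l2 x) * Z2 x) / F x) x :=
        (hasDerivAt_id x).sub hlogd
      have heq : 1 - (α * (1 - l1 x) * Z1 x + (1 - α) * (1 - l2 x) * Z2 x) / F x = lam x := by
        rw [hlam x hxI]
        have hF' : F x ≠ 0 := (hFpos x).ne'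
        simp only [hF, hZ1, hZ2] at hF' ⊢
        field_simp
        ring
      rw [heq] at hgd
      exact hgd.hasDerivWithinAt
    have hcg : ContinuousOn (fun u => u - Real.log (F u)) (Set.Icc 0 t) := by
      apply ContinuousOn.sub continuousOn_id
      apply ContinuousOn.log
      · exact hcF.mono (Set.Icc_subset_Icc le_rfl ht.2)
      · intro u _; exact (hFpos u).ne'
    have hilam : IntervalIntegrable lam volume 0 t := by
      apply ContinuousOn.intervalIntegrable
      rw [Set.uIcc_of_le ht.1]
      exact hclam.mono (Set.Icc_subset_Icc le_rfl ht.2)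
    have := intervalIntegral.integral_eq_sub_of_hasDeriv_right_of_le ht.1 hcg hg hilam
    rw [this]
    have hF0 : F 0 = 1 := by
      simp [hF, hZ1, hZ2]
    rw [hF0]
    simp
  refine ⟨hint, ?_⟩
  have : (∫ s in (0:ℝ)..t, (1 - lam s)) = t - ∫ s in (0:ℝ)..t, lam s := by
    have hilam : IntervalIntegrable lam volume 0 t := by
      apply ContinuousOn.intervalIntegrable
      rw [Set.uIcc_of_le ht.1]
      exact hclam.mono (Set.Icc_subset_Icc le_rfl ht.2)
    rw [intervalIntegral.integral_sub intervalIntegrable_const hilam]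
    simp
  rw [this, hint]
  have : t - (t - Real.log (F t)) = Real.log (F t) := by ring
  rw [this, Real.exp_log (hFpos t)]
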